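/- For a single element x observed n_1, n_2, ..., n_K times across K episodes (with Σ n_k = N total), writing N_k = Σ_{j<k} n_j, if N_k > n_k for all k > k_0 then Σ_{k > k_0} n_k / sqrt(max{N_k, 1}) ≤ (2+√2) sqrt(N). -/

import Mathlib

/-- for counts n_1,...,n_K with partial sums N_k = Σ_{j<k} n_j
and total N = Σ_{k=1}^K n_k, if N_k > n_k for all k > k_0 then
Σ_{k > k_0} n_k/√(max{N_k,1}) ≤ (2+√2)√N. -/
theorem single_element_count_bound (K k0 : ℕ) (n : ℕ → ℕ)
    (hdom : ∀ k, k0 < k → k ≤ K → n k < ∑ j ∈ Finset.Ico 1 k, n j) :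
    ∑ k ∈ Finset.Icc (k0 + 1) K,
        (n k : ℝ) / Real.sqrt (max (∑ j ∈ Finset.Ico 1 k, n j) 1)
      ≤ (2 + Real.sqrt 2) * Real.sqrt (∑ k ∈ Finset.Icc 1 K, n k) := by
  have hs2 : (0:ℝ) ≤ Real.sqrt 2 := Real.sqrt_nonneg 2
  by_cases hK : k0 + 1 ≤ K
  · set f : ℕ → ℝ := fun k => Real.sqrt (∑ j ∈ Finset.Ico 1 k, (n j : ℝ)) with hf
    have key : ∀ k ∈ Finset.Icc (k0+1) K,
        (n k : ℝ) / Real.sqrt (max (∑ j ∈ Finset.Ico 1 k, (n j : ℝ)) 1)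
          ≤ (1 + Real.sqrt 2) * (f (k+1) - f k) := by
      intro k hk
      simp only [Finset.mem_Icc] at hk
      have hd := hdom k (by omega) hk.2
      have hcast : (∑ j ∈ Finset.Ico 1 k, (n j : ℝ))
          = ((∑ j ∈ Finset.Ico 1 k, n j : ℕ) : ℝ) := by push_cast; rfl
      have hA1 : (1:ℝ) ≤ ∑ j ∈ Finset.Ico 1 k, (n j : ℝ) := by
        rw [hcast]; exact_mod_cast (by omega : 1 ≤ ∑ j ∈ Finset.Ico 1 k, n j)
      have hmax : max (∑ j ∈ Finset.Ico 1 k, (n j : ℝ)) 1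
          = ∑ j ∈ Finset.Ico 1 k, (n j : ℝ) := max_eq_left hA1
      rw [hmax]
      have hsucc : (∑ j ∈ Finset.Ico 1 (k+1), (n j:ℝ))
          = (∑ j ∈ Finset.Ico 1 k, (n j:ℝ)) + n k :=
        Finset.sum_Ico_succ_top (by omega) _
      set A : ℝ := ∑ j ∈ Finset.Ico 1 k, (n j:ℝ) with hA
      set x := Real.sqrt A with hx
      set y := f (k+1) with hy
      have hApos : (0:ℝ) ≤ A := by linarith
      have hx2 : x * x = A := Real.mul_self_sqrt hApos
      have hy2 : y * y = A + (n k : ℝ) := by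
        rw [hy]
        show Real.sqrt (∑ j ∈ Finset.Ico 1 (k+1), (n j:ℝ))
            * Real.sqrt (∑ j ∈ Finset.Ico 1 (k+1), (n j:ℝ)) = _
        rw [Real.mul_self_sqrt (by positivity), hsucc]
      have hxpos : 0 < x := Real.sqrt_pos.mpr (by linarith)
      have hnA : (n k : ℝ) < A := by
        rw [hcast]; exact_mod_cast hd
      have hyx : x ≤ y := by
        rw [hy, hx]
        show Real.sqrt A ≤ Real.sqrt (∑ j ∈ Finset.Ico 1 (k+1), (n j:ℝ))
        exact Real.sqrt_le_sqrt (by rw [hsucc]; exact le_add_of_nonneg_right (n k).cast_nonneg)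
      have hysx : y ≤ Real.sqrt 2 * x := by
        have h : y ≤ Real.sqrt (2 * A) := by
          rw [hy]
          exact Real.sqrt_le_sqrt (by rw [hsucc]; linarith)
        rwa [Real.sqrt_mul (by norm_num) _] at h
      rw [div_le_iff₀ hxpos]
      nlinarith [mul_nonneg (sub_nonneg.2 hyx) (sub_nonneg.2 hysx)]
    calc ∑ k ∈ Finset.Icc (k0 + 1) K,
          (n k : ℝ) / Real.sqrt (max (∑ j ∈ Finset.Ico 1 k, (n j:ℝ)) 1)
        ≤ ∑ k ∈ Finset.Icc (k0+1) K, (1 + Real.sqrt 2) * (f (k+1) - f k) :=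
          Finset.sum_le_sum key
      _ = (1 + Real.sqrt 2) * ∑ k ∈ Finset.Ico (k0+1) (K+1), (f (k+1) - f k) := by
          rw [← Finset.mul_sum, Finset.Ico_add_one_right_eq_Icc]
      _ = (1 + Real.sqrt 2) * (f (K+1) - f (k0+1)) := by
          rw [Finset.sum_Ico_eq_sub _ (by omega), Finset.sum_range_sub, Finset.sum_range_sub]
          ring
      _ ≤ (2 + Real.sqrt 2) * Real.sqrt (∑ k ∈ Finset.Icc 1 K, (n k:ℝ)) := by
          have h1 : f (K+1) = Real.sqrt (∑ k ∈ Finset.Icc 1 K, (n k:ℝ)) := by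
            show Real.sqrt (∑ j ∈ Finset.Ico 1 (K+1), (n j:ℝ)) = _
            rw [Finset.Ico_add_one_right_eq_Icc]
          have h2 : 0 ≤ f (k0+1) := Real.sqrt_nonneg _
          have h3 : 0 ≤ f (K+1) := Real.sqrt_nonneg _
          nlinarith [h3]
  · rw [Finset.Icc_eq_empty (by omega)]
    simp
    positivity
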